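/- Let n ≥ 1, p ∈ ℝ, and let ρ be a 2^n × 2^n Hermitian matrix. Then the purity of ρ after one layer of n-fold local depolarizing noise is given exactly in the Pauli basis by Tr( (D_p^{⊗n}(ρ))² ) = 2^{−n} · Σ_{P} p^{2·w(P)} · (Tr(P·ρ))², where the sum runs over all Pauli strings P on n qubits. -/

import Mathlib

open Matrix BigOperators

noncomputable section

/-- The four single-qubit Pauli matrices: σ₀ = I, σ₁ = X, σ₂ = Y, σ₃ = Z. -/
def pauli : Fin 4 → Matrix (Fin 2) (Fin 2) ℂ :=
  ![1, !![0, 1; 1, 0], !![0, -Complex.I; Complex.I, 0], !![1, 0; 0, -1]]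

/-- The 2^n × 2^n matrix associated to a Pauli string `P : Fin n → Fin 4`,
given by the n-fold Kronecker product ⊗ᵢ σ_{P i}. -/
def pauliMatrix {n : ℕ} (P : Fin n → Fin 4) :
    Matrix (Fin n → Fin 2) (Fin n → Fin 2) ℂ :=
  Matrix.of fun x y => ∏ i, pauli (P i) (x i) (y i)

/-- The weight of a Pauli string: the number of sites acted on nontrivially. -/
def pweight {n : ℕ} (P : Fin n → Fin 4) : ℕ :=
  (Finset.univ.filter fun i => P i ≠ 0).card

/-- The single-qubit depolarizing channel `D_p` acting on qubit `i` of an n-qubit matrix: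
`M ↦ p·M + (1-p)·Tr_i(M) ⊗ (I/2)_i`, written entrywise. -/
def depolSite {n : ℕ} (p : ℝ) (i : Fin n)
    (M : Matrix (Fin n → Fin 2) (Fin n → Fin 2) ℂ) :
    Matrix (Fin n → Fin 2) (Fin n → Fin 2) ℂ :=
  Matrix.of fun x y =>
    (p : ℂ) * M x y +
      ((1 - p : ℝ) : ℂ) *
        (if x i = y i then
          (2 : ℂ)⁻¹ * ∑ v : Fin 2, M (Function.update x i v) (Function.update y i v)
        else 0)

/-- The n-fold local depolarizing channel `D_p^{⊗n}`, i.e. the (commuting) composition of the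
single-qubit depolarizing channels on each of the n sites.  It is the unique linear map with
`D_p^{⊗n}(M₁ ⊗ ⋯ ⊗ Mₙ) = D_p(M₁) ⊗ ⋯ ⊗ D_p(Mₙ)`. -/
def depolN {n : ℕ} (p : ℝ)
    (M : Matrix (Fin n → Fin 2) (Fin n → Fin 2) ℂ) :
    Matrix (Fin n → Fin 2) (Fin n → Fin 2) ℂ :=
  (List.finRange n).foldr (fun i acc => depolSite p i acc) M

/- ### Auxiliary lemmas -/

lemma sum_prod_eq {n : ℕ} {β : Type*} [Fintype β] (g : Fin n → β → ℂ) :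
    ∑ x : Fin n → β, ∏ i, g i (x i) = ∏ i, ∑ b, g i b := by
  classical
  rw [Finset.prod_univ_sum, Fintype.piFinset_univ]

lemma sum_sum_prod_eq {n : ℕ} (f : Fin n → Fin 2 → Fin 2 → ℂ) :
    ∑ x : Fin n → Fin 2, ∑ y : Fin n → Fin 2, ∏ i, f i (x i) (y i)
      = ∏ i, ∑ a : Fin 2, ∑ b : Fin 2, f i a b := by
  calc ∑ x : Fin n → Fin 2, ∑ y : Fin n → Fin 2, ∏ i, f i (x i) (y i)
      = ∑ x : Fin n → Fin 2, ∏ i, ∑ b : Fin 2, f i (x i) b := by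
        refine Finset.sum_congr rfl fun x _ => ?_
        exact sum_prod_eq fun i b => f i (x i) b
    _ = ∏ i, ∑ a : Fin 2, ∑ b : Fin 2, f i a b :=
        sum_prod_eq fun i a => ∑ b, f i a b

lemma pauli_trace (k : Fin 4) : ∑ v : Fin 2, pauli k v v = if k = 0 then 2 else 0 := by
  fin_cases k <;> simp [pauli, Fin.sum_univ_two, Matrix.one_apply] <;> norm_num

lemma pauli_complete1 (a b c d : Fin 2) :
    ∑ k : Fin 4, pauli k a b * pauli k c d
      = 2 * ((if a = d then 1 else 0) * (if b = c then 1 else 0)) := by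
  fin_cases a <;> fin_cases b <;> fin_cases c <;> fin_cases d <;>
    simp [pauli, Fin.sum_univ_four, Matrix.one_apply] <;> ring_nf <;>
    simp [Complex.I_sq] <;> ring

lemma pauli_orth1 (j k : Fin 4) :
    ∑ a : Fin 2, ∑ b : Fin 2, pauli j a b * pauli k b a = if j = k then 2 else 0 := by
  fin_cases j <;> fin_cases k <;>
    simp [pauli, Fin.sum_univ_two, Matrix.one_apply] <;> ring_nf <;>
    simp [Complex.I_sq] <;> ring

lemma pauliMatrix_mul_trace {n : ℕ} (P Q : Fin n → Fin 4) :
    (pauliMatrix P * pauliMatrix Q).trace = if P = Q then (2 : ℂ) ^ n else 0 := by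
  classical
  have : (pauliMatrix P * pauliMatrix Q).trace
      = ∑ x : Fin n → Fin 2, ∑ y : Fin n → Fin 2,
          ∏ i, (pauli (P i) (x i) (y i) * pauli (Q i) (y i) (x i)) := by
    simp only [Matrix.trace, Matrix.diag, Matrix.mul_apply, pauliMatrix, Matrix.of_apply]
    refine Finset.sum_congr rfl fun x _ => Finset.sum_congr rfl fun y _ => ?_
    rw [Finset.prod_mul_distrib]
  rw [this, sum_sum_prod_eq fun i a b => pauli (P i) a b * pauli (Q i) b a]
  have h2 : ∀ i, (∑ a : Fin 2, ∑ b : Fin 2, pauli (P i) a b * pauli (Q i) b a)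
      = if P i = Q i then 2 else 0 := fun i => pauli_orth1 _ _
  simp only [h2]
  by_cases h : P = Q
  · simp [h, Finset.prod_const, Finset.card_univ]
  · obtain ⟨i, hi⟩ : ∃ i, P i ≠ Q i := by
      by_contra hc; push_neg at hc; exact h (funext hc)
    rw [if_neg h]
    exact Finset.prod_eq_zero (Finset.mem_univ i) (if_neg hi)

lemma pauli_decomp {n : ℕ} (ρ : Matrix (Fin n → Fin 2) (Fin n → Fin 2) ℂ) :
    ρ = ((2 : ℂ) ^ n)⁻¹ •
        ∑ P : Fin n → Fin 4, ((pauliMatrix P * ρ).trace) • pauliMatrix P := by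
  classical
  ext x y
  simp only [Matrix.smul_apply, Matrix.sum_apply, Matrix.trace, Matrix.diag, Matrix.mul_apply,
    pauliMatrix, Matrix.of_apply, smul_eq_mul]
  have key : ∑ P : Fin n → Fin 4,
        (∑ a : Fin n → Fin 2, ∑ b : Fin n → Fin 2,
            (∏ i, pauli (P i) (a i) (b i)) * ρ b a) * ∏ i, pauli (P i) (x i) (y i)
      = (2 : ℂ) ^ n * ρ x y := by
    have swap : ∀ P : Fin n → Fin 4,
        (∑ a : Fin n → Fin 2, ∑ b : Fin n → Fin 2,
            (∏ i, pauli (P i) (a i) (b i)) * ρ b a) * ∏ i, pauli (P i) (x i) (y i)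
          = ∑ a : Fin n → Fin 2, ∑ b : Fin n → Fin 2,
              ρ b a * ((∏ i, pauli (P i) (a i) (b i)) * ∏ i, pauli (P i) (x i) (y i)) := by
      intro P
      rw [Finset.sum_mul]
      refine Finset.sum_congr rfl fun a _ => ?_
      rw [Finset.sum_mul]
      refine Finset.sum_congr rfl fun b _ => ?_
      ring
    simp only [swap]
    rw [Finset.sum_comm]
    have inner : ∀ a : Fin n → Fin 2,
        ∑ P : Fin n → Fin 4, ∑ b : Fin n → Fin 2,
            ρ b a * ((∏ i, pauli (P i) (a i) (b i)) * ∏ i, pauli (P i) (x i) (y i))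
          = ∑ b : Fin n → Fin 2, ρ b a *
              ((2:ℂ)^n * ((if a = y then 1 else 0) * (if b = x then 1 else 0))) := by
      intro a
      rw [Finset.sum_comm]
      refine Finset.sum_congr rfl fun b _ => ?_
      rw [← Finset.mul_sum]
      congr 1
      have : ∑ P : Fin n → Fin 4,
          (∏ i, pauli (P i) (a i) (b i)) * ∏ i, pauli (P i) (x i) (y i)
            = ∑ P : Fin n → Fin 4, ∏ i, (pauli (P i) (a i) (b i) * pauli (P i) (x i) (y i)) := by
        refine Finset.sum_congr rfl fun P _ => ?_
        rw [Finset.prod_mul_distrib]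
      rw [this, sum_prod_eq fun i k => pauli k (a i) (b i) * pauli k (x i) (y i)]
      have h1 : ∀ i, (∑ k : Fin 4, pauli k (a i) (b i) * pauli k (x i) (y i))
          = 2 * ((if a i = y i then 1 else 0) * (if b i = x i then 1 else 0)) :=
        fun i => pauli_complete1 _ _ _ _
      simp only [h1]
      rw [Finset.prod_mul_distrib, Finset.prod_mul_distrib, Finset.prod_const,
        Finset.card_univ, Fintype.card_fin, Finset.prod_boole, Finset.prod_boole]
      congr 2
      · simp [funext_iff]
      · simp [funext_iff]
    simp only [inner]
    simp only [mul_ite, mul_one, mul_zero, ite_mul, zero_mul, one_mul]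
    simp [Finset.sum_ite_eq', mul_comm]
  rw [key, ← mul_assoc, inv_mul_cancel₀ (pow_ne_zero n two_ne_zero), one_mul]

lemma depolSite_add {n : ℕ} (p : ℝ) (i : Fin n)
    (A B : Matrix (Fin n → Fin 2) (Fin n → Fin 2) ℂ) :
    depolSite p i (A + B) = depolSite p i A + depolSite p i B := by
  ext x y
  simp only [depolSite, Matrix.of_apply, Matrix.add_apply, Finset.sum_add_distrib]
  split_ifs <;> ring

lemma depolSite_smul {n : ℕ} (p : ℝ) (i : Fin n) (c : ℂ)
    (A : Matrix (Fin n → Fin 2) (Fin n → Fin 2) ℂ) :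
    depolSite p i (c • A) = c • depolSite p i A := by
  ext x y
  simp only [depolSite, Matrix.of_apply, Matrix.smul_apply, smul_eq_mul, ← Finset.mul_sum]
  split_ifs <;> ring

lemma depolSite_zero {n : ℕ} (p : ℝ) (i : Fin n) :
    depolSite p i (0 : Matrix (Fin n → Fin 2) (Fin n → Fin 2) ℂ) = 0 := by
  ext x y
  simp [depolSite]

lemma depolN_add {n : ℕ} (p : ℝ)
    (A B : Matrix (Fin n → Fin 2) (Fin n → Fin 2) ℂ) :
    depolN p (A + B) = depolN p A + depolN p B := by
  unfold depolN
  induction List.finRange n with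
  | nil => rfl
  | cons i l ih => simp only [List.foldr_cons, ih, depolSite_add]

lemma depolN_smul {n : ℕ} (p : ℝ) (c : ℂ)
    (A : Matrix (Fin n → Fin 2) (Fin n → Fin 2) ℂ) :
    depolN p (c • A) = c • depolN p A := by
  unfold depolN
  induction List.finRange n with
  | nil => rfl
  | cons i l ih => simp only [List.foldr_cons, ih, depolSite_smul]

lemma depolN_zero {n : ℕ} (p : ℝ) :
    depolN p (0 : Matrix (Fin n → Fin 2) (Fin n → Fin 2) ℂ) = 0 := by
  unfold depolN
  induction List.finRange n with
  | nil => rfl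
  | cons i l ih => simp only [List.foldr_cons, ih, depolSite_zero]

lemma depolN_sum {n : ℕ} (p : ℝ) {ι : Type*} (s : Finset ι)
    (f : ι → Matrix (Fin n → Fin 2) (Fin n → Fin 2) ℂ) :
    depolN p (∑ j ∈ s, f j) = ∑ j ∈ s, depolN p (f j) := by
  classical
  induction s using Finset.induction_on with
  | empty => simp [depolN_zero]
  | insert _ _ hj ih => simp [Finset.sum_insert hj, depolN_add, ih]

lemma depolSite_pauli {n : ℕ} (p : ℝ) (i : Fin n) (P : Fin n → Fin 4) :
    depolSite p i (pauliMatrix P)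
      = (if P i = 0 then (1 : ℂ) else (p : ℂ)) • pauliMatrix P := by
  classical
  ext x y
  simp only [depolSite, pauliMatrix, Matrix.of_apply, Matrix.smul_apply, smul_eq_mul]
  have hsplit : ∀ v : Fin 2,
      (∏ j, pauli (P j) (Function.update x i v j) (Function.update y i v j))
        = pauli (P i) v v * ∏ j ∈ Finset.univ.erase i, pauli (P j) (x j) (y j) := by
    intro v
    rw [← Finset.mul_prod_erase Finset.univ _ (Finset.mem_univ i)]
    congr 1
    · simp
    · refine Finset.prod_congr rfl fun j hj => ?_
      rw [Function.update_of_ne (Finset.ne_of_mem_erase hj),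
        Function.update_of_ne (Finset.ne_of_mem_erase hj)]
  have hprod : (∏ j, pauli (P j) (x j) (y j))
      = pauli (P i) (x i) (y i) * ∏ j ∈ Finset.univ.erase i, pauli (P j) (x j) (y j) :=
    (Finset.mul_prod_erase Finset.univ _ (Finset.mem_univ i)).symm
  have hsum : ∑ v : Fin 2,
      (∏ j, pauli (P j) (Function.update x i v j) (Function.update y i v j))
        = (if P i = 0 then (2:ℂ) else 0) *
            ∏ j ∈ Finset.univ.erase i, pauli (P j) (x j) (y j) := by
    simp only [hsplit]
    rw [← Finset.sum_mul, pauli_trace]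
  rw [hsum, hprod]
  by_cases h : P i = 0
  · simp only [h, if_true]
    have hp0 : pauli 0 (x i) (y i) = if x i = y i then 1 else 0 := by
      simp [pauli, Matrix.one_apply]
    rw [hp0]
    split_ifs with hxy
    · push_cast; ring
    · ring
  · simp only [h, if_false]
    split_ifs with hxy <;> push_cast <;> ring

lemma depolN_pauli {n : ℕ} (p : ℝ) (P : Fin n → Fin 4) :
    depolN p (pauliMatrix P) = ((p : ℂ) ^ pweight P) • pauliMatrix P := by
  classical
  have key : ∀ l : List (Fin n),
      l.foldr (fun i acc => depolSite p i acc) (pauliMatrix P)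
        = ((l.map fun i => if P i = 0 then (1:ℂ) else (p:ℂ)).prod) • pauliMatrix P := by
    intro l
    induction l with
    | nil => simp
    | cons i l ih =>
        simp only [List.foldr_cons, ih, depolSite_smul, depolSite_pauli, List.map_cons,
          List.prod_cons, smul_smul]
        rw [mul_comm]
  rw [depolN, key]
  congr 1
  have : ((List.finRange n).map fun i => if P i = 0 then (1:ℂ) else (p:ℂ)).prod
      = ∏ i, (if P i = 0 then (1:ℂ) else (p:ℂ)) := rfl
  rw [this]
  calc ∏ i, (if P i = 0 then (1:ℂ) else (p:ℂ))
      = ∏ i ∈ Finset.univ.filter (fun i => P i ≠ 0), (p:ℂ) := by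
        rw [Finset.prod_filter]
        refine Finset.prod_congr rfl fun i _ => ?_
        by_cases h : P i = 0 <;> simp [h]
    _ = (p:ℂ) ^ pweight P := by rw [Finset.prod_const, pweight]

/-- the purity after one layer of n-fold local depolarizing noise, expanded in
the Pauli basis: `Tr((D_p^{⊗n}(ρ))²) = 2^{-n} Σ_P p^{2 w(P)} (Tr(P·ρ))²`. -/
theorem purity_depolN_pauli_expansion {n : ℕ} (hn : 1 ≤ n) (p : ℝ)
    (ρ : Matrix (Fin n → Fin 2) (Fin n → Fin 2) ℂ) (hherm : ρ.IsHermitian) :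
    (depolN p ρ * depolN p ρ).trace
      = ((2 : ℂ) ^ n)⁻¹ *
          ∑ P : Fin n → Fin 4, (p : ℂ) ^ (2 * pweight P) * ((pauliMatrix P * ρ).trace) ^ 2 := by
  classical
  set t : (Fin n → Fin 4) → ℂ := fun P => (pauliMatrix P * ρ).trace with ht
  have hD : depolN p ρ = ((2 : ℂ) ^ n)⁻¹ •
      ∑ P : Fin n → Fin 4, (t P * (p:ℂ) ^ pweight P) • pauliMatrix P := by
    conv_lhs => rw [pauli_decomp ρ]
    rw [depolN_smul, depolN_sum]
    congr 1
    refine Finset.sum_congr rfl fun P _ => ?_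
    rw [depolN_smul, depolN_pauli, smul_smul]
  rw [hD]
  rw [smul_mul_assoc, Matrix.mul_smul, Matrix.trace_smul, Matrix.trace_smul]
  rw [Finset.sum_mul, Matrix.trace_sum]
  have hterm : ∀ P : Fin n → Fin 4,
      ((t P * (p:ℂ) ^ pweight P) • pauliMatrix P *
          ∑ Q : Fin n → Fin 4, (t Q * (p:ℂ) ^ pweight Q) • pauliMatrix Q).trace
        = (t P * (p:ℂ) ^ pweight P) ^ 2 * (2:ℂ) ^ n := by
    intro P
    rw [Matrix.mul_sum, Matrix.trace_sum]
    have : ∀ Q : Fin n → Fin 4,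
        ((t P * (p:ℂ) ^ pweight P) • pauliMatrix P *
            ((t Q * (p:ℂ) ^ pweight Q) • pauliMatrix Q)).trace
          = (t P * (p:ℂ) ^ pweight P) * (t Q * (p:ℂ) ^ pweight Q) *
              (if P = Q then (2:ℂ)^n else 0) := by
      intro Q
      rw [smul_mul_assoc, Matrix.mul_smul, Matrix.trace_smul, Matrix.trace_smul,
        pauliMatrix_mul_trace]
      simp [smul_eq_mul]; ring
    simp only [this, mul_ite, mul_zero]
    rw [Finset.sum_ite_eq]
    simp only [Finset.mem_univ, if_true, sq]
  simp only [hterm]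
  rw [smul_eq_mul, smul_eq_mul, Finset.mul_sum, Finset.mul_sum, Finset.mul_sum]
  refine Finset.sum_congr rfl fun P _ => ?_
  have h2n : ((2:ℂ)^n) ≠ 0 := pow_ne_zero _ two_ne_zero
  rw [mul_pow, ← pow_mul, mul_comm (pweight P) 2]
  field_simp
  ring
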